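/- Let N and m be positive natural numbers. Let p_1, ..., p_S be natural numbers with each p_i ∈ {0, 1, ..., m−1}, and suppose 2^{p_1} + 2^{p_2} + ... + 2^{p_S} = N·2^m. Then the N × 2^m grid can be tiled by horizontal strips of these widths: there exist natural numbers r_1, ..., r_S < N and c_1, ..., c_S such that the strips T_i = {(r_i, y) : c_i ≤ y < c_i + 2^{p_i}} are contained in {0,...,N−1} × {0,...,2^m−1}, are pairwise disjoint, and their union is all of {0,...,N−1} × {0,...,2^m−1}. -/

import Mathlib

/-- The horizontal strip of width `w` placed at row `r`, starting column `c`: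
`{(r, y) : c ≤ y < c + w}`. -/
def strip (r c w : ℕ) : Set (ℕ × ℕ) :=
  {q | q.1 = r ∧ c ≤ q.2 ∧ q.2 < c + w}

/-- The full `(N, M)` cluster mesh `{0,...,N−1} × {0,...,M−1}`. -/
def fullMesh (N M : ℕ) : Set (ℕ × ℕ) :=
  {q | q.1 < N ∧ q.2 < M}

/-- Prefix-sum covering: any `x` below the total is inside some block. -/
lemma prefix_cover (W : ℕ → ℕ) : ∀ n x, x < ∑ j ∈ Finset.range n, W j →
    ∃ k < n, (∑ j ∈ Finset.range k, W j) ≤ x ∧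
      x < (∑ j ∈ Finset.range k, W j) + W k := by
  intro n
  induction n with
  | zero => simp
  | succ n ih =>
    intro x hx
    rw [Finset.sum_range_succ] at hx
    by_cases h : x < ∑ j ∈ Finset.range n, W j
    · obtain ⟨k, hk, h1, h2⟩ := ih x h
      exact ⟨k, Nat.lt_succ_of_lt hk, h1, h2⟩
    · exact ⟨n, Nat.lt_succ_self n, Nat.le_of_not_lt h, hx⟩

/-- Membership in a strip that fits inside a row of width `M`, in terms of the
linearized coordinate `q.1 * M + q.2`. -/
lemma mem_strip_iff (M r c w : ℕ) (hcw : c + w ≤ M) (q : ℕ × ℕ) :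
    q ∈ strip r c w ↔
      q.2 < M ∧ r * M + c ≤ q.1 * M + q.2 ∧ q.1 * M + q.2 < r * M + (c + w) := by
  obtain ⟨a, b⟩ := q
  simp only [strip, Set.mem_setOf_eq]
  constructor
  · rintro ⟨rfl, h1, h2⟩
    exact ⟨lt_of_lt_of_le h2 hcw, by omega, by omega⟩
  · rintro ⟨hb, h1, h2⟩
    have har : a = r := by
      rcases lt_trichotomy a r with h | h | h
      · exfalso
        have : a * M + b < (a + 1) * M := by ring_nf; omega
        have h2' : (a + 1) * M ≤ r * M := Nat.mul_le_mul_right M h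
        omega
      · exact h
      · exfalso
        have : (r + 1) * M ≤ a * M := Nat.mul_le_mul_right M h
        have : r * M + (c + w) ≤ (r + 1) * M := by ring_nf; omega
        omega
    subst har
    exact ⟨rfl, by omega, by omega⟩

theorem strip_covering (N m S : ℕ) (hN : 0 < N) (hm : 0 < m)
    (p : Fin S → ℕ) (hp : ∀ i, p i ≤ m - 1)
    (hsum : ∑ i, 2 ^ p i = N * 2 ^ m) :
    ∃ r c : Fin S → ℕ,
      (∀ i, r i < N) ∧
      (∀ i, strip (r i) (c i) (2 ^ p i) ⊆ fullMesh N (2 ^ m)) ∧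
      (∀ i j, i ≠ j →
        Disjoint (strip (r i) (c i) (2 ^ p i)) (strip (r j) (c j) (2 ^ p j))) ∧
      (⋃ i, strip (r i) (c i) (2 ^ p i)) = fullMesh N (2 ^ m) := by
  classical
  set M := 2 ^ m with hM
  have hM0 : 0 < M := Nat.pow_pos (by norm_num)
  -- sort indices so that widths are antitone
  set σ : Equiv.Perm (Fin S) := Tuple.sort (OrderDual.toDual ∘ p) with hσ
  have hanti : ∀ j k : Fin S, j ≤ k → p (σ k) ≤ p (σ j) := by
    intro j k hjk
    exact Tuple.monotone_sort (OrderDual.toDual ∘ p) hjk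
  -- widths in sorted order, extended to ℕ
  set W : ℕ → ℕ := fun j => if h : j < S then 2 ^ p (σ ⟨j, h⟩) else 0 with hW
  set off : ℕ → ℕ := fun n => ∑ j ∈ Finset.range n, W j with hoff
  have hWk : ∀ k : Fin S, W (k : ℕ) = 2 ^ p (σ k) := by
    intro k
    simp [hW, k.isLt]
  have hoffS : off S = N * M := by
    show ∑ j ∈ Finset.range S, W j = N * M
    have : ∑ j ∈ Finset.range S, W j = ∑ k : Fin S, 2 ^ p (σ k) := by
      rw [Finset.sum_range fun j => W j]
      exact Finset.sum_congr rfl fun k _ => hWk k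
    rw [this, Equiv.sum_comp σ fun i => 2 ^ p i, hsum]
  have hoffmono : ∀ a b : ℕ, a ≤ b → off a ≤ off b := by
    intro a b hab
    exact Finset.sum_le_sum_of_subset (Finset.range_subset_range.mpr hab)
  have hsucc : ∀ n : ℕ, off (n + 1) = off n + W n := fun n => Finset.sum_range_succ W n
  -- divisibility: each offset is a multiple of its own width
  have hdvd : ∀ k : Fin S, 2 ^ p (σ k) ∣ off (k : ℕ) := by
    intro k
    apply Finset.dvd_sum
    intro j hj
    rw [Finset.mem_range] at hj
    have hjS : j < S := lt_trans hj k.isLt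
    have : p (σ k) ≤ p (σ ⟨j, hjS⟩) := hanti ⟨j, hjS⟩ k (le_of_lt hj)
    rw [hW]
    simp only [hjS, dif_pos]
    exact pow_dvd_pow 2 this
  have hpm : ∀ i : Fin S, 2 ^ p i ∣ M := by
    intro i
    exact pow_dvd_pow 2 (by have := hp i; omega)
  -- each strip fits in its row
  have hfit : ∀ k : Fin S, off (k : ℕ) % M + 2 ^ p (σ k) ≤ M := by
    intro k
    have h1 : 2 ^ p (σ k) ∣ off (k : ℕ) % M :=
      (Nat.dvd_mod_iff (hpm (σ k))).mpr (hdvd k)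
    have h2 : off (k : ℕ) % M < M := Nat.mod_lt _ hM0
    have h3 : 2 ^ p (σ k) ∣ M - off (k : ℕ) % M := Nat.dvd_sub (hpm (σ k)) h1
    have h4 : 2 ^ p (σ k) ≤ M - off (k : ℕ) % M :=
      Nat.le_of_dvd (by omega) h3
    omega
  -- define placement
  refine ⟨fun i => off ((σ.symm i : Fin S) : ℕ) / M,
    fun i => off ((σ.symm i : Fin S) : ℕ) % M, ?_, ?_, ?_, ?_⟩
  · -- rows < N
    intro i
    have h1 : off ((σ.symm i : Fin S) : ℕ) < N * M := by
      calc off ((σ.symm i : Fin S) : ℕ) < off ((σ.symm i : Fin S) : ℕ) + W ((σ.symm i : Fin S) : ℕ) := by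
            rw [hWk]
            exact Nat.lt_add_of_pos_right (by positivity)
        _ = off (((σ.symm i : Fin S) : ℕ) + 1) := (hsucc _).symm
        _ ≤ off S := hoffmono _ _ (σ.symm i).isLt
        _ = N * M := hoffS
    exact Nat.div_lt_of_lt_mul (by rwa [mul_comm] at h1)
  · -- strips inside mesh
    intro i q hq
    dsimp only at hq
    set k := σ.symm i with hk
    have hki : σ k = i := σ.apply_symm_apply i
    have hfit' : off (k : ℕ) % M + 2 ^ p i ≤ M := by rw [← hki]; exact hfit k
    obtain ⟨hr, hc1, hc2⟩ := hq
    constructor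
    · rw [hr]
      have h1 : off (k : ℕ) < N * M := by
        calc off (k : ℕ) < off (k : ℕ) + W (k : ℕ) := by
              rw [hWk]
              exact Nat.lt_add_of_pos_right (by positivity)
          _ = off ((k : ℕ) + 1) := (hsucc _).symm
          _ ≤ off S := hoffmono _ _ k.isLt
          _ = N * M := hoffS
      exact Nat.div_lt_of_lt_mul (by rwa [mul_comm] at h1)
    · have : q.2 < off (k : ℕ) % M + 2 ^ p i := hc2
      omega
  · -- disjoint
    intro i j hij
    rw [Set.disjoint_left]
    intro q hqi hqj
    dsimp only at hqi hqj
    set ki := σ.symm i with hki'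
    set kj := σ.symm j with hkj'
    have hii : σ ki = i := σ.apply_symm_apply i
    have hjj : σ kj = j := σ.apply_symm_apply j
    have hfi : off (ki : ℕ) % M + 2 ^ p i ≤ M := by rw [← hii]; exact hfit ki
    have hfj : off (kj : ℕ) % M + 2 ^ p j ≤ M := by rw [← hjj]; exact hfit kj
    rw [mem_strip_iff M _ _ _ hfi] at hqi
    rw [mem_strip_iff M _ _ _ hfj] at hqj
    have hoi : off (ki : ℕ) / M * M + off (ki : ℕ) % M = off (ki : ℕ) :=
      Nat.div_add_mod' (off (ki : ℕ)) M
    have hoj : off (kj : ℕ) / M * M + off (kj : ℕ) % M = off (kj : ℕ) :=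
      Nat.div_add_mod' (off (kj : ℕ)) M
    have hkij : ki ≠ kj := fun h => hij (by rw [← hii, ← hjj, h])
    have key : ∀ a b : Fin S, a < b →
        off (a : ℕ) + 2 ^ p (σ a) ≤ off (b : ℕ) := by
      intro a b hab
      have : off (a : ℕ) + W (a : ℕ) = off ((a : ℕ) + 1) := (hsucc _).symm
      rw [hWk] at this
      rw [this]
      exact hoffmono _ _ hab
    rcases lt_or_gt_of_ne hkij with h | h
    · have := key ki kj h
      rw [hii] at this
      omega
    · have := key kj ki h
      rw [hjj] at this
      omega
  · -- union is everything
    ext q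
    simp only [Set.mem_iUnion]
    constructor
    · rintro ⟨i, hq⟩
      set k := σ.symm i with hk
      have hki : σ k = i := σ.apply_symm_apply i
      have hfit' : off (k : ℕ) % M + 2 ^ p i ≤ M := by rw [← hki]; exact hfit k
      rw [mem_strip_iff M _ _ _ hfit'] at hq
      obtain ⟨hq2, hq3, hq4⟩ := hq
      refine ⟨?_, hq2⟩
      have htot : off (k : ℕ) + 2 ^ p i ≤ N * M := by
        have h5 : off (k : ℕ) + W (k : ℕ) = off ((k : ℕ) + 1) := (hsucc _).symm
        rw [hWk, hki] at h5
        rw [h5, ← hoffS]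
        exact hoffmono _ _ k.isLt
      have hoi : off (k : ℕ) / M * M + off (k : ℕ) % M = off (k : ℕ) :=
        Nat.div_add_mod' (off (k : ℕ)) M
      have : q.1 * M + q.2 < N * M := by omega
      by_contra hcon
      push_neg at hcon
      have : N * M ≤ q.1 * M := Nat.mul_le_mul_right M hcon
      omega
    · rintro ⟨hq1, hq2⟩
      have ht : q.1 * M + q.2 < off S := by
        rw [hoffS]
        have : (q.1 + 1) * M ≤ N * M := Nat.mul_le_mul_right M hq1
        have : q.1 * M + M ≤ N * M := by ring_nf at this ⊢; omega
        omega
      obtain ⟨k, hkS, h1, h2⟩ := prefix_cover W S (q.1 * M + q.2) ht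
      refine ⟨σ ⟨k, hkS⟩, ?_⟩
      have hks : σ.symm (σ ⟨k, hkS⟩) = ⟨k, hkS⟩ := σ.symm_apply_apply _
      rw [hks]
      have e0 : ((⟨k, hkS⟩ : Fin S) : ℕ) = k := rfl
      have hfit' : off ((⟨k, hkS⟩ : Fin S) : ℕ) % M + 2 ^ p (σ ⟨k, hkS⟩) ≤ M :=
        hfit ⟨k, hkS⟩
      rw [mem_strip_iff M _ _ _ hfit']
      have hoi : off ((⟨k, hkS⟩ : Fin S) : ℕ) / M * M + off ((⟨k, hkS⟩ : Fin S) : ℕ) % M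
          = off ((⟨k, hkS⟩ : Fin S) : ℕ) :=
        Nat.div_add_mod' _ M
      have hWk' : W ((⟨k, hkS⟩ : Fin S) : ℕ) = 2 ^ p (σ ⟨k, hkS⟩) := hWk ⟨k, hkS⟩
      have e1 : (∑ j ∈ Finset.range k, W j) = off ((⟨k, hkS⟩ : Fin S) : ℕ) := rfl
      have e3 : W k = 2 ^ p (σ ⟨k, hkS⟩) := hWk' 
      exact ⟨hq2, by omega, by omega⟩
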